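/- Sharaya's example: Consider the 3×2 interval matrix A whose entries are the intervals A₁₁ = [1,1], A₁₂ = [0,1], A₂₁ = [−1,−1], A₂₂ = [0,1], A₃₁ = [−1,1], A₃₂ = [1,1]. Then (i) every real 3×2 matrix A whose entries lie in the respective intervals has full column rank 2, and (ii) for each of the three 2×2 interval submatrices (obtained by deleting one row), there exists a real 2×2 matrix with entries in the respective intervals that is not invertible; hence A has full column rank but contains no regular square interval submatrix of size 2. -/

import Mathlib

/-- Sharaya's example: the 3×2 interval matrix with entry intervals
`[1,1], [0,1]; [-1,-1], [0,1]; [-1,1], [1,1]` has full column rank, yet each of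
its three 2×2 interval submatrices (obtained by deleting one row) contains a
non-invertible matrix. -/
theorem sharaya_example :
    let L : Matrix (Fin 3) (Fin 2) ℝ := !![1, 0; -1, 0; -1, 1]
    let U : Matrix (Fin 3) (Fin 2) ℝ := !![1, 1; -1, 1; 1, 1]
    (∀ A : Matrix (Fin 3) (Fin 2) ℝ,
        (∀ i j, L i j ≤ A i j ∧ A i j ≤ U i j) →
        ∀ x : Fin 2 → ℝ, A.mulVec x = 0 → x = 0) ∧
    (∀ r : Fin 3, ∃ B : Matrix (Fin 2) (Fin 2) ℝ,
        (∀ i j, L (r.succAbove i) j ≤ B i j ∧ B i j ≤ U (r.succAbove i) j) ∧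
        ¬ IsUnit B) := by
  intro L U
  constructor
  · intro A hA x hx
    have e0 := congrFun hx 0
    have e1 := congrFun hx 1
    have e2 := congrFun hx 2
    simp only [Matrix.mulVec, dotProduct, Fin.sum_univ_two, Pi.zero_apply] at e0 e1 e2
    have h00 : A 0 0 = 1 := le_antisymm (by simpa [U] using (hA 0 0).2)
      (by simpa [L] using (hA 0 0).1)
    have h10 : A 1 0 = -1 := le_antisymm (by simpa [U] using (hA 1 0).2)
      (by simpa [L] using (hA 1 0).1)
    have h21 : A 2 1 = 1 := le_antisymm (by simpa [U] using (hA 2 1).2)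
      (by simpa [L] using (hA 2 1).1)
    have ha : (0:ℝ) ≤ A 0 1 := by simpa [L] using (hA 0 1).1
    have hb : (0:ℝ) ≤ A 1 1 := by simpa [L] using (hA 1 1).1
    rw [h00] at e0; rw [h10] at e1; rw [h21] at e2
    have key : (A 0 1 + A 1 1) * x 1 = 0 := by linear_combination e0 + e1
    have hx01 : x 0 = 0 ∧ x 1 = 0 := by
      rcases mul_eq_zero.mp key with h | h
      · have ha0 : A 0 1 = 0 := by linarith
        have hb0 : A 1 1 = 0 := by linarith
        rw [hb0] at e1
        have hx0 : x 0 = 0 := by linarith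
        have hc : A 2 0 * x 0 = 0 := by rw [hx0]; ring
        exact ⟨hx0, by linarith⟩
      · have : A 0 1 * x 1 = 0 := by rw [h]; ring
        exact ⟨by linarith, h⟩
    funext i
    fin_cases i <;> simp [hx01.1, hx01.2]
  · intro r
    fin_cases r
    · refine ⟨!![-1, 1; -1, 1], ?_, ?_⟩
      · intro i j
        fin_cases i <;> fin_cases j <;>
          norm_num [L, U, Fin.succAbove, Fin.lt_def, Matrix.vecHead, Matrix.vecTail, Matrix.cons_val_two]
      · intro h
        have hd := (Matrix.isUnit_iff_isUnit_det _).mp h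
        rw [Matrix.det_fin_two_of] at hd
        norm_num at hd
    · refine ⟨!![1, 1; 1, 1], ?_, ?_⟩
      · intro i j
        fin_cases i <;> fin_cases j <;>
          norm_num [L, U, Fin.succAbove, Fin.lt_def, Matrix.vecHead, Matrix.vecTail, Matrix.cons_val_two]
      · intro h
        have hd := (Matrix.isUnit_iff_isUnit_det _).mp h
        rw [Matrix.det_fin_two_of] at hd
        norm_num at hd
    · refine ⟨!![1, 0; -1, 0], ?_, ?_⟩
      · intro i j
        fin_cases i <;> fin_cases j <;>
          norm_num [L, U, Fin.succAbove, Fin.lt_def, Matrix.vecHead, Matrix.vecTail]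
      · intro h
        have hd := (Matrix.isUnit_iff_isUnit_det _).mp h
        rw [Matrix.det_fin_two_of] at hd
        norm_num at hd
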